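/- arXiv:math/0502165 — 2 statements merged into one kernel-verified Lean document; each statement's English description precedes it below -/
import Mathlib

section
/- For λ = Σ_{i=1}^r m_i ω_i with m_i ∈ ℕ, the cardinality of the set B^r(λ) of tuples (ℓ_{i,j}, s_{i,j})_{1 ≤ i ≤ j ≤ r}, where each s_{i,j} is a weakly increasing sequence of length ℓ_{i,j} of nonnegative integers satisfying s_{i,j}(ℓ_{i,j}) ≤ m_i + Σ_{p=j+1}^{r} ℓ_{i+1,p} − Σ_{p=j}^{r} ℓ_{i,p} (or ℓ_{i,j} = 0), equals Π_{i=1}^{r} C(r+1, i)^{m_i}. -/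
open Finset

lemma natCard_sigma {ι : Type*} [Fintype ι] (β : ι → Type*) [∀ i, Finite (β i)] :
    Nat.card (Σ i, β i) = ∑ i, Nat.card (β i) := by
  classical
  have : ∀ i, Fintype (β i) := fun i => Fintype.ofFinite (β i)
  rw [Nat.card_eq_fintype_card, Fintype.card_sigma]
  exact Finset.sum_congr rfl fun i _ => (Nat.card_eq_fintype_card).symm

/-- Monotone sequences of length `k` with values in `[0, D]`. -/
abbrev MSeq (k D : ℕ) : Type := {s : Fin k → ℕ // Monotone s ∧ ∀ i, s i ≤ D}

instance mseqFinite (k D : ℕ) : Finite (MSeq k D) := by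
  apply Finite.of_injective (fun s : MSeq k D => fun i : Fin k => (⟨s.1 i, Nat.lt_succ_of_le (s.2.2 i)⟩ : Fin (D+1)))
  intro a b h
  apply Subtype.ext
  funext i
  exact congrArg Fin.val (congrFun h i)

/-- split off the last entry -/
def mseqEquiv (k D : ℕ) : MSeq (k+1) D ≃ Σ d : Fin (D+1), MSeq k d where
  toFun s := ⟨⟨s.1 (Fin.last k), Nat.lt_succ_of_le (s.2.2 _)⟩,
    Fin.init s.1, fun i j hij => s.2.1 (Fin.castSucc_le_castSucc_iff.mpr hij),
    fun i => s.2.1 (Fin.le_last _)⟩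
  invFun p := ⟨Fin.snoc p.2.1 p.1, by
      constructor
      · intro i j hij
        rcases Fin.eq_castSucc_or_eq_last j with ⟨j', rfl⟩ | hj
        · rcases Fin.eq_castSucc_or_eq_last i with ⟨i', rfl⟩ | hi
          · simp only [Fin.snoc_castSucc]
            exact p.2.2.1 (Fin.castSucc_le_castSucc_iff.mp hij)
          · subst hi
            exact absurd hij (not_le.mpr (Fin.castSucc_lt_last j'))
        · subst hj
          rcases Fin.eq_castSucc_or_eq_last i with ⟨i', rfl⟩ | hi
          · simp only [Fin.snoc_castSucc, Fin.snoc_last]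
            exact p.2.2.2 i'
          · subst hi; exact le_refl _
      · intro i
        rcases Fin.eq_castSucc_or_eq_last i with ⟨i', rfl⟩ | hi
        · simp only [Fin.snoc_castSucc]
          exact le_trans (p.2.2.2 i') (Nat.lt_succ_iff.mp p.1.2)
        · subst hi; simp only [Fin.snoc_last]; exact Nat.lt_succ_iff.mp p.1.2⟩
  left_inv s := by
    apply Subtype.ext
    simpa using Fin.snoc_init_self s.1
  right_inv p := by
    obtain ⟨d, t⟩ := p
    refine Sigma.ext (Fin.ext (by simp)) ?_
    refine (Subtype.heq_iff_coe_eq ?_).mpr (by simp)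
    intro s
    simp

lemma mseq_card (k D : ℕ) : Nat.card (MSeq k D) = (D + k).choose k := by
  induction k generalizing D with
  | zero =>
    have : Unique (MSeq 0 D) := ⟨⟨⟨fun i => i.elim0, fun i => i.elim0, fun i => i.elim0⟩⟩,
      fun s => Subtype.ext (funext fun i => i.elim0)⟩
    simp [Nat.card_unique]
  | succ k ih =>
    rw [Nat.card_congr (mseqEquiv k D), natCard_sigma]
    have : ∀ d : Fin (D+1), Nat.card (MSeq k d) = ((d : ℕ) + k).choose k := fun d => ih d
    rw [Finset.sum_congr rfl (fun d _ => this d)]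
    rw [Fin.sum_univ_eq_sum_range (fun d => (d + k).choose k)]
    have : ∑ d ∈ Finset.range (D+1), (d + k).choose k = ∑ i ∈ Icc k (D + k), i.choose k := by
      rw [Finset.range_eq_Ico]
      refine Finset.sum_nbij' (fun d => d + k) (fun i => i - k) ?_ ?_ ?_ ?_ ?_ <;>
        intros <;> simp_all <;> omega
    rw [this, Nat.sum_Icc_choose]
    have h2 : D + k + 1 = D + (k + 1) := by omega
    rw [h2]


abbrev TT : Type := Σ ℓ : ℕ → ℕ → ℕ, ∀ i j, Fin (ℓ i j) → ℕ

abbrev Br (r : ℕ) (m : ℕ → ℕ) : Type :=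
  {x : TT //
    (∀ i j, x.1 i j ≠ 0 → 1 ≤ i ∧ i ≤ j ∧ j ≤ r) ∧
    (∀ i j, Monotone (x.2 i j)) ∧
    (∀ i j, ∀ h : x.1 i j ≠ 0,
      (x.2 i j ⟨x.1 i j - 1, Nat.sub_lt (Nat.pos_of_ne_zero h) Nat.one_pos⟩ : ℤ) ≤
        (m i : ℤ) + ∑ p ∈ Finset.Icc (j + 1) r, (x.1 (i + 1) p : ℤ)
          - ∑ p ∈ Finset.Icc j r, (x.1 i p : ℤ))}

lemma Fin.cast_le_cast' {n k : ℕ} (h : n = k) {a b : Fin n} (hab : a ≤ b) :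
    Fin.cast h a ≤ Fin.cast h b := by subst h; exact hab

lemma TT.ext2 {a b : TT} (h1 : ∀ i j, a.1 i j = b.1 i j)
    (h2 : ∀ i j (v : Fin (a.1 i j)), a.2 i j v = b.2 i j (Fin.cast (h1 i j) v)) : a = b := by
  obtain ⟨f, g⟩ := a; obtain ⟨f', g'⟩ := b
  have hf : f = f' := funext fun i => funext fun j => h1 i j
  subst hf
  simp only [Sigma.mk.inj_iff, heq_eq_eq, true_and]
  funext i j v
  have h3 := h2 i j v
  have h4 : Fin.cast (h1 i j) v = v := Fin.ext rfl
  rwa [h4] at h3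

/-- lengths of the last column -/
abbrev Lt (r : ℕ) (m : ℕ → ℕ) : Type := ∀ i : (Icc 1 (r+1) : Finset ℕ), Fin (m i + 1)

def vl {r : ℕ} {m : ℕ → ℕ} (l : Lt r m) (i : ℕ) : ℕ :=
  if h : i ∈ Icc 1 (r+1) then (l ⟨i, h⟩ : ℕ) else 0

lemma vl_mem {r m} (l : Lt r m) {i : ℕ} (h : i ∈ Icc 1 (r+1)) : vl l i = l ⟨i, h⟩ :=
  dif_pos h

lemma vl_nmem {r m} (l : Lt r m) {i : ℕ} (h : i ∉ Icc 1 (r+1)) : vl l i = 0 :=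
  dif_neg h

lemma vl_le {r m} (l : Lt r m) (i : ℕ) : vl l i ≤ m i := by
  unfold vl; split
  · exact Nat.lt_succ_iff.mp (l _).2
  · exact Nat.zero_le _

def m' {r : ℕ} {m : ℕ → ℕ} (l : Lt r m) (i : ℕ) : ℕ := m i + vl l (i+1) - vl l i

abbrev StepT (r : ℕ) (m : ℕ → ℕ) : Type :=
  Σ l : Lt r m, (∀ i : (Icc 1 (r+1) : Finset ℕ), MSeq (l i) (m i - l i)) × Br r (m' l)

def Gfun (r : ℕ) (m : ℕ → ℕ) (z : StepT r m) : Br (r+1) m :=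
  ⟨⟨fun i j => if j = r+1 then vl z.1 i else z.2.2.1.1 i j,
    fun i j =>
      if h : j = r+1 then
        (if hi : i ∈ Icc 1 (r+1) then
          fun v => (z.2.1 ⟨i, hi⟩).1 (Fin.cast ((if_pos h).trans (vl_mem z.1 hi)) v)
        else fun _ => 0)
      else fun v => z.2.2.1.2 i j (Fin.cast (if_neg h) v)⟩, by
    obtain ⟨l, seqs, y⟩ := z
    refine ⟨?_, ?_, ?_⟩
    · intro i j hne
      dsimp only at hne ⊢
      by_cases hj : j = r+1
      · subst hj
        rw [if_pos rfl] at hne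
        have hi : i ∈ Icc 1 (r+1) := by
          by_contra hi
          exact hne (vl_nmem l hi)
        rw [mem_Icc] at hi
        omega
      · rw [if_neg hj] at hne
        have := y.2.1 i j hne
        omega
    · intro i j
      dsimp only
      by_cases h : j = r+1
      · rw [dif_pos h]
        by_cases hi : i ∈ Icc 1 (r+1)
        · rw [dif_pos hi]
          intro a b hab
          exact (seqs ⟨i, hi⟩).2.1 (Fin.cast_le_cast' _ hab)
        · rw [dif_neg hi]
          exact monotone_const
      · rw [dif_neg h]
        intro a b hab
        exact y.2.2.1 i j (Fin.cast_le_cast' _ hab)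
    · intro i j hne
      dsimp only at hne ⊢
      by_cases hj : j = r+1
      · subst hj
        rw [if_pos rfl] at hne
        have hi : i ∈ Icc 1 (r+1) := by
          by_contra hi
          exact hne (vl_nmem l hi)
        rw [dif_pos rfl, dif_pos hi]
        rw [Finset.Icc_eq_empty (by omega : ¬ (r+1+1 ≤ r+1)), Finset.sum_empty,
          Finset.Icc_self, Finset.sum_singleton]
        have key : ∀ v : Fin ((l ⟨i, hi⟩ : ℕ)),
            ((seqs ⟨i, hi⟩).1 v : ℤ) ≤ (m i : ℤ) + 0 -
              ((if r + 1 = r + 1 then vl l i else y.1.1 i (r+1) : ℕ) : ℤ) := by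
          intro v
          rw [if_pos rfl]
          have h1 : (seqs ⟨i, hi⟩).1 v ≤ m i - (l ⟨i, hi⟩ : ℕ) := (seqs ⟨i, hi⟩).2.2 v
          have h2 := vl_le l i
          have h3 := vl_mem l hi
          omega
        exact key _
      · rw [if_neg hj] at hne
        rw [dif_neg hj]
        have hsupp := y.2.1 i j hne
        have hb := y.2.2.2 i j hne
        have hs1 : ∑ p ∈ Icc (j+1) (r+1), ((if p = r+1 then vl l (i+1) else y.1.1 (i+1) p : ℕ) : ℤ)
            = ∑ p ∈ Icc (j+1) r, (y.1.1 (i+1) p : ℤ) + (vl l (i+1) : ℤ) := by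
          rw [Finset.sum_Icc_succ_top (by omega : j+1 ≤ r+1), if_pos rfl]
          congr 1
          refine Finset.sum_congr rfl fun p hp => ?_
          rw [mem_Icc] at hp
          rw [if_neg (by omega : ¬ p = r+1)]
        have hs2 : ∑ p ∈ Icc j (r+1), ((if p = r+1 then vl l i else y.1.1 i p : ℕ) : ℤ)
            = ∑ p ∈ Icc j r, (y.1.1 i p : ℤ) + (vl l i : ℤ) := by
          rw [Finset.sum_Icc_succ_top (by omega : j ≤ r+1), if_pos rfl]
          congr 1
          refine Finset.sum_congr rfl fun p hp => ?_
          rw [mem_Icc] at hp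
          rw [if_neg (by omega : ¬ p = r+1)]
        rw [hs1, hs2]
        have hmi : (m' l i : ℤ) = (m i : ℤ) + (vl l (i+1) : ℤ) - (vl l i : ℤ) := by
          have h9 := vl_le l i
          unfold m'
          omega
        have key : ∀ v : Fin (y.1.1 i j), ((y.1.2 i j v : ℕ) : ℤ) ≤
            (m i : ℤ) + (∑ p ∈ Icc (j+1) r, (y.1.1 (i+1) p : ℤ) + (vl l (i+1) : ℤ))
              - (∑ p ∈ Icc j r, (y.1.1 i p : ℤ) + (vl l i : ℤ)) := by
          intro v
          have hmono : y.1.2 i j v ≤ y.1.2 i j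
              ⟨y.1.1 i j - 1, Nat.sub_lt (Nat.pos_of_ne_zero hne) Nat.one_pos⟩ :=
            y.2.2.1 i j (by simp only [Fin.le_def]; exact Nat.le_sub_one_of_lt v.2)
          rw [hmi] at hb
          generalize (∑ p ∈ Icc (j+1) r, (y.1.1 (i+1) p : ℤ)) = S1 at *
          generalize (∑ p ∈ Icc j r, (y.1.1 i p : ℤ)) = S2 at *
          omega
        exact key _⟩

lemma len_le {r : ℕ} {m : ℕ → ℕ} (x : Br (r+1) m) (i : ℕ) : x.1.1 i (r+1) ≤ m i := by
  by_cases h : x.1.1 i (r+1) = 0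
  · omega
  · have h3 := x.2.2.2 i (r+1) h
    rw [Finset.Icc_eq_empty (by omega : ¬ (r+1+1 ≤ r+1)), Finset.sum_empty,
      Finset.Icc_self, Finset.sum_singleton] at h3
    have h4 : (0:ℤ) ≤ (x.1.2 i (r+1) ⟨x.1.1 i (r+1) - 1,
        Nat.sub_lt (Nat.pos_of_ne_zero h) Nat.one_pos⟩ : ℤ) := Int.natCast_nonneg _
    omega

lemma seq_le {r : ℕ} {m : ℕ → ℕ} (x : Br (r+1) m) (i : ℕ) (v : Fin (x.1.1 i (r+1))) :
    x.1.2 i (r+1) v ≤ m i - x.1.1 i (r+1) := by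
  have h : x.1.1 i (r+1) ≠ 0 := by
    intro h0
    exact absurd v.2 (by omega)
  have h3 := x.2.2.2 i (r+1) h
  rw [Finset.Icc_eq_empty (by omega : ¬ (r+1+1 ≤ r+1)), Finset.sum_empty,
    Finset.Icc_self, Finset.sum_singleton] at h3
  have h4 : x.1.2 i (r+1) v ≤ x.1.2 i (r+1) ⟨x.1.1 i (r+1) - 1,
      Nat.sub_lt (Nat.pos_of_ne_zero h) Nat.one_pos⟩ :=
    x.2.2.1 i (r+1) (by simp [Fin.le_def]; omega)
  omega

def lOf {r : ℕ} {m : ℕ → ℕ} (x : Br (r+1) m) : Lt r m :=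
  fun i => ⟨x.1.1 i (r+1), Nat.lt_succ_of_le (len_le x i)⟩

lemma vl_lOf {r : ℕ} {m : ℕ → ℕ} (x : Br (r+1) m) (i : ℕ) :
    vl (lOf x) i = x.1.1 i (r+1) := by
  by_cases h : i ∈ Icc 1 (r+1)
  · rw [vl_mem _ h]; rfl
  · rw [vl_nmem _ h]
    rcases Nat.eq_zero_or_pos (x.1.1 i (r+1)) with h0 | h0
    · exact h0.symm
    · exfalso
      have h1 := x.2.1 i (r+1) (by omega)
      rw [mem_Icc] at h
      omega

def restOf {r : ℕ} {m : ℕ → ℕ} (x : Br (r+1) m) : Br r (m' (lOf x)) :=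
  ⟨⟨fun i j => if j ≤ r then x.1.1 i j else 0,
    fun i j => if h : j ≤ r then fun v => x.1.2 i j (Fin.cast (if_pos h) v)
      else fun _ => 0⟩, by
    refine ⟨?_, ?_, ?_⟩
    · intro i j hne
      dsimp only at hne
      by_cases hj : j ≤ r
      · rw [if_pos hj] at hne
        have := x.2.1 i j hne
        omega
      · rw [if_neg hj] at hne
        exact absurd rfl hne
    · intro i j
      dsimp only
      by_cases hj : j ≤ r
      · rw [dif_pos hj]
        intro a b hab
        exact x.2.2.1 i j (Fin.cast_le_cast' _ hab)
      · rw [dif_neg hj]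
        exact monotone_const
    · intro i j hne
      dsimp only at hne ⊢
      by_cases hj : j ≤ r
      swap
      · rw [if_neg hj] at hne; exact absurd rfl hne
      rw [if_pos hj] at hne
      rw [dif_pos hj]
      have hb := x.2.2.2 i j hne
      have hs1 : ∑ p ∈ Icc (j+1) (r+1), (x.1.1 (i+1) p : ℤ)
          = ∑ p ∈ Icc (j+1) r, ((if p ≤ r then x.1.1 (i+1) p else 0 : ℕ) : ℤ)
            + (x.1.1 (i+1) (r+1) : ℤ) := by
        rw [Finset.sum_Icc_succ_top (by omega : j+1 ≤ r+1)]
        congr 1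
        refine Finset.sum_congr rfl fun p hp => ?_
        rw [mem_Icc] at hp
        rw [if_pos hp.2]
      have hs2 : ∑ p ∈ Icc j (r+1), (x.1.1 i p : ℤ)
          = ∑ p ∈ Icc j r, ((if p ≤ r then x.1.1 i p else 0 : ℕ) : ℤ)
            + (x.1.1 i (r+1) : ℤ) := by
        rw [Finset.sum_Icc_succ_top (by omega : j ≤ r+1)]
        congr 1
        refine Finset.sum_congr rfl fun p hp => ?_
        rw [mem_Icc] at hp
        rw [if_pos hp.2]
      rw [hs1, hs2] at hb
      have hmi : (m' (lOf x) i : ℤ)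
          = (m i : ℤ) + (x.1.1 (i+1) (r+1) : ℤ) - (x.1.1 i (r+1) : ℤ) := by
        have h9 := len_le x i
        unfold m'
        rw [vl_lOf, vl_lOf]
        omega
      have key : ∀ v : Fin (x.1.1 i j), ((x.1.2 i j v : ℕ) : ℤ) ≤
          (m' (lOf x) i : ℤ)
            + ∑ p ∈ Icc (j+1) r, ((if p ≤ r then x.1.1 (i+1) p else 0 : ℕ) : ℤ)
            - ∑ p ∈ Icc j r, ((if p ≤ r then x.1.1 i p else 0 : ℕ) : ℤ) := by
        intro v
        have hmono : x.1.2 i j v ≤ x.1.2 i j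
            ⟨x.1.1 i j - 1, Nat.sub_lt (Nat.pos_of_ne_zero hne) Nat.one_pos⟩ :=
          x.2.2.1 i j (by simp only [Fin.le_def]; exact Nat.le_sub_one_of_lt v.2)
        rw [hmi]
        generalize (∑ p ∈ Icc (j+1) r, ((if p ≤ r then x.1.1 (i+1) p else 0 : ℕ) : ℤ)) = S1 at *
        generalize (∑ p ∈ Icc j r, ((if p ≤ r then x.1.1 i p else 0 : ℕ) : ℤ)) = S2 at *
        omega
      exact key _⟩

def Ffun (r : ℕ) (m : ℕ → ℕ) (x : Br (r+1) m) : StepT r m :=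
  ⟨lOf x,
   fun i => ⟨fun v => x.1.2 i (r+1) v, fun a b hab => x.2.2.1 i (r+1) hab,
     fun v => seq_le x i v⟩,
   restOf x⟩

lemma StepT.ext2 {r : ℕ} {m : ℕ → ℕ} {z z' : StepT r m} (hl : z.1 = z'.1)
    (hs : ∀ i, ∀ v : Fin ((z.1 i : ℕ)), (z.2.1 i).1 v
      = (z'.2.1 i).1 (Fin.cast (by rw [hl]) v))
    (hy : z.2.2.1 = z'.2.2.1) : z = z' := by
  obtain ⟨l, s, y⟩ := z
  obtain ⟨l', s', y'⟩ := z'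
  dsimp only at hl
  subst hl
  have hss : s = s' := by
    funext i
    apply Subtype.ext
    funext v
    have h2 := hs i v
    rwa [show Fin.cast _ v = v from Fin.ext rfl] at h2
  have hyy : y = y' := Subtype.ext hy
  rw [hss, hyy]

lemma GF (r : ℕ) (m : ℕ → ℕ) (x : Br (r+1) m) : Gfun r m (Ffun r m x) = x := by
  apply Subtype.ext
  refine TT.ext2 (fun i j => ?_) (fun i j v => ?_)
  · show (if j = r+1 then vl (lOf x) i else if j ≤ r then x.1.1 i j else 0) = x.1.1 i j
    by_cases hj : j = r+1
    · rw [if_pos hj, vl_lOf, hj]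
    · rw [if_neg hj]
      by_cases hjr : j ≤ r
      · rw [if_pos hjr]
      · rw [if_neg hjr]
        rcases Nat.eq_zero_or_pos (x.1.1 i j) with h0 | h0
        · exact h0.symm
        · have := x.2.1 i j (by omega)
          omega
  · dsimp only [Gfun, Ffun, restOf, lOf]
    by_cases hj : j = r+1
    · subst hj
      rw [dif_pos rfl]
      by_cases hi : i ∈ Icc 1 (r+1)
      · rw [dif_pos hi]
      · rw [dif_neg hi]
        have hE : (Gfun r m (Ffun r m x)).1.1 i (r+1) = 0 := by
          show (if (r+1:ℕ) = r+1 then vl (lOf x) i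
            else if (r+1:ℕ) ≤ r then x.1.1 i (r+1) else 0) = 0
          rw [if_pos rfl, vl_nmem _ hi]
        exact (Fin.cast hE v).elim0
    · rw [dif_neg hj]
      by_cases hjr : j ≤ r
      · rw [dif_pos hjr]
        exact congrArg _ (Fin.ext rfl)
      · rw [dif_neg hjr]
        have hE : (Gfun r m (Ffun r m x)).1.1 i j = 0 := by
          show (if j = r+1 then vl (lOf x) i
            else if j ≤ r then x.1.1 i j else 0) = 0
          rw [if_neg hj, if_neg hjr]
        exact (Fin.cast hE v).elim0

lemma FG (r : ℕ) (m : ℕ → ℕ) (z : StepT r m) : Ffun r m (Gfun r m z) = z := by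
  refine StepT.ext2 ?_ (fun i v => ?_) ?_
  · funext i
    apply Fin.ext
    show (if (r+1 : ℕ) = r+1 then vl z.1 i else z.2.2.1.1 i (r+1)) = (z.1 i : ℕ)
    rw [if_pos rfl, vl_mem z.1 i.2]
  · show (Gfun r m z).1.2 (i : ℕ) (r+1) v = _
    dsimp only [Gfun]
    rw [dif_pos rfl, dif_pos i.2]
    rfl
  · refine TT.ext2 (fun i j => ?_) (fun i j v => ?_)
    · show (if j ≤ r then (if j = r+1 then vl z.1 i else z.2.2.1.1 i j) else 0)
        = z.2.2.1.1 i j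
      by_cases hjr : j ≤ r
      · rw [if_pos hjr, if_neg (by omega : ¬ j = r+1)]
      · rw [if_neg hjr]
        rcases Nat.eq_zero_or_pos (z.2.2.1.1 i j) with h0 | h0
        · exact h0.symm
        · have := z.2.2.2.1 i j (by omega)
          omega
    · dsimp only [Ffun, Gfun, restOf, lOf]
      by_cases hjr : j ≤ r
      · rw [dif_pos hjr, dif_neg (by omega : ¬ j = r+1)]
        exact congrArg _ (Fin.ext rfl)
      · rw [dif_neg hjr]
        have hE : (Ffun r m (Gfun r m z)).2.2.1.1 i j = 0 := by
          show (if j ≤ r then (if j = r+1 then vl z.1 i else z.2.2.1.1 i j) else 0) = 0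
          rw [if_neg hjr]
        exact (Fin.cast hE v).elim0

def stepEquiv (r : ℕ) (m : ℕ → ℕ) : Br (r+1) m ≃ StepT r m where
  toFun := Ffun r m
  invFun := Gfun r m
  left_inv := GF r m
  right_inv := FG r m

def br0 (m : ℕ → ℕ) : Br 0 m :=
  ⟨⟨fun _ _ => 0, fun _ _ => Fin.elim0⟩, by
    refine ⟨?_, ?_, ?_⟩
    · intro i j h; exact absurd rfl h
    · intro i j a b hab; exact a.elim0
    · intro i j h; exact absurd rfl h⟩

instance uniqueBr0 (m : ℕ → ℕ) : Unique (Br 0 m) where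
  default := br0 m
  uniq x := by
    have h1 : ∀ i j, x.1.1 i j = 0 := by
      intro i j
      rcases Nat.eq_zero_or_pos (x.1.1 i j) with h0 | h0
      · exact h0
      · have := x.2.1 i j (by omega)
        omega
    exact Subtype.ext (TT.ext2 h1 (fun i j v => (Fin.cast (h1 i j) v).elim0))

lemma key_prod (r : ℕ) (m v : ℕ → ℕ) (hv : ∀ i, v i ≤ m i) :
    (∏ i ∈ Icc 1 (r+1), (m i).choose (v i)) *
      ∏ i ∈ Icc 1 r, ((r+1).choose i)^(m i + v (i+1) - v i)
    = ∏ i ∈ Icc 1 (r+1),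
        ((m i).choose (v i) * (((r+1).choose i)^(m i - v i) * ((r+1).choose (i-1))^(v i))) := by
  rw [Finset.prod_mul_distrib]
  congr 1
  rw [Finset.prod_mul_distrib]
  have h1 : ∏ i ∈ Icc 1 (r+1), ((r+1).choose i)^(m i - v i)
      = ∏ i ∈ Icc 1 r, ((r+1).choose i)^(m i - v i) := by
    rw [Finset.prod_Icc_succ_top (by omega : 1 ≤ r+1), Nat.choose_self, one_pow, mul_one]
  have h2 : ∏ i ∈ Icc 1 (r+1), ((r+1).choose (i-1))^(v i)
      = ∏ i ∈ Icc 0 r, ((r+1).choose i)^(v (i+1)) := by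
    refine Finset.prod_nbij' (fun i => i - 1) (fun i => i + 1) ?_ ?_ ?_ ?_ ?_
    · intro a ha; simp only [mem_Icc] at ha ⊢; omega
    · intro a ha; simp only [mem_Icc] at ha ⊢; omega
    · intro a ha; simp only [mem_Icc] at ha ⊢; omega
    · intro a ha; simp only [mem_Icc] at ha ⊢; omega
    · intro a ha
      simp only [mem_Icc] at ha ⊢
      rw [show a - 1 + 1 = a by omega]
  have h3 : ∏ i ∈ Icc 0 r, ((r+1).choose i)^(v (i+1))
      = ∏ i ∈ Icc 1 r, ((r+1).choose i)^(v (i+1)) := by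
    rw [show Icc 0 r = insert 0 (Icc 1 r) by
        ext p; simp [mem_Icc, Finset.mem_insert]; omega]
    rw [Finset.prod_insert (by simp [mem_Icc])]
    rw [Nat.choose_zero_right, one_pow, one_mul]
  rw [h1, h2, h3, ← Finset.prod_mul_distrib]
  refine Finset.prod_congr rfl fun i hi => ?_
  rw [← pow_add]
  congr 1
  have := hv i
  omega

lemma key_sum (R i n : ℕ) (hi : 1 ≤ i) :
    ∑ k : Fin (n+1), n.choose k * ((R.choose i)^(n - k) * (R.choose (i-1))^(k : ℕ))
      = ((R+1).choose i)^n := by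
  obtain ⟨i', rfl⟩ : ∃ i', i = i' + 1 := ⟨i - 1, by omega⟩
  rw [Fin.sum_univ_eq_sum_range (fun k => n.choose k * ((R.choose (i'+1))^(n - k)
    * (R.choose (i'+1-1))^k))]
  have := add_pow (R.choose (i'+1-1)) (R.choose (i'+1)) n (R := ℕ)
  rw [show (i'+1) - 1 = i' from rfl] at *
  rw [show R.choose i' + R.choose (i'+1) = (R+1).choose (i'+1) from
    (Nat.choose_succ_succ R i').symm] at this
  rw [this]
  refine Finset.sum_congr rfl fun k hk => ?_
  push_cast
  ring

lemma main_card (r : ℕ) : ∀ m : ℕ → ℕ,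
    Nat.card (Br r m) = ∏ i ∈ Icc 1 r, ((r+1).choose i)^(m i) := by
  induction r with
  | zero =>
    intro m
    rw [show (Icc 1 0 : Finset ℕ) = ∅ from rfl, Finset.prod_empty, Nat.card_unique]
  | succ r ih =>
    intro m
    classical
    rw [Nat.card_congr (stepEquiv r m)]
    have hfin : ∀ l : Lt r m, Finite (Br r (m' l)) := by
      intro l
      have hpos : 0 < ∏ i ∈ Icc 1 r, ((r+1).choose i)^(m' l i) :=
        Finset.prod_pos fun i hi =>
          pow_pos (Nat.choose_pos (by rw [mem_Icc] at hi; omega)) _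
      rw [← ih (m' l)] at hpos
      exact (Nat.card_pos_iff.mp hpos).2
    haveI := hfin
    rw [natCard_sigma]
    have hfib : ∀ l : Lt r m,
        Nat.card ((∀ i : (Icc 1 (r+1) : Finset ℕ), MSeq (l i) (m i - l i)) × Br r (m' l))
        = ∏ i : (Icc 1 (r+1) : Finset ℕ), ((m (i:ℕ)).choose (l i) *
            (((r+1).choose (i:ℕ))^(m (i:ℕ) - (l i : ℕ))
              * ((r+1).choose ((i:ℕ)-1))^((l i : ℕ)))) := by
      intro l
      rw [Nat.card_prod, Nat.card_pi, ih (m' l)]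
      have e1 : ∀ i : (Icc 1 (r+1) : Finset ℕ), Nat.card (MSeq (l i) (m i - l i))
          = (m (i : ℕ)).choose (vl l (i : ℕ)) := by
        intro i
        rw [mseq_card, vl_mem l i.2]
        congr 1
        have : (l i : ℕ) ≤ m (i:ℕ) := Nat.lt_succ_iff.mp (l i).2
        omega
      rw [Finset.prod_congr rfl (fun i _ => e1 i)]
      rw [Finset.prod_coe_sort (Icc 1 (r+1)) (fun i => (m i).choose (vl l i))]
      have e2 : ∀ i ∈ Icc 1 r, ((r+1).choose i)^(m' l i)
          = ((r+1).choose i)^(m i + vl l (i+1) - vl l i) := fun i _ => rfl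
      rw [Finset.prod_congr rfl e2, key_prod r m (vl l) (vl_le l)]
      rw [← Finset.prod_coe_sort (Icc 1 (r+1))]
      refine Finset.prod_congr rfl fun i _ => ?_
      rw [vl_mem l i.2]
    rw [Finset.sum_congr rfl (fun l _ => hfib l)]
    have swap := (Finset.prod_univ_sum (fun i : (Icc 1 (r+1) : Finset ℕ) =>
        (Finset.univ : Finset (Fin (m (i:ℕ) + 1))))
      (fun i k => (m (i:ℕ)).choose (k:ℕ) *
        (((r+1).choose (i:ℕ))^(m (i:ℕ) - (k:ℕ)) * ((r+1).choose ((i:ℕ)-1))^((k:ℕ)))))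
    rw [Fintype.piFinset_univ] at swap
    rw [← swap]
    have e3 : ∀ i : (Icc 1 (r+1) : Finset ℕ),
        ∑ k : Fin (m (i:ℕ) + 1), (m (i:ℕ)).choose (k:ℕ) *
          (((r+1).choose (i:ℕ))^(m (i:ℕ) - (k:ℕ)) * ((r+1).choose ((i:ℕ)-1))^((k:ℕ)))
        = ((r+2).choose (i:ℕ))^(m (i:ℕ)) := by
      intro i
      have hi1 : 1 ≤ (i : ℕ) := (mem_Icc.mp i.2).1
      exact key_sum (r+1) (i:ℕ) (m (i:ℕ)) hi1
    rw [Finset.prod_congr rfl (fun i _ => e3 i)]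
    rw [Finset.prod_coe_sort (Icc 1 (r+1)) (fun i => ((r+2).choose i)^(m i))]



/-- For `λ = Σ_{i=1}^r m_i ω_i`, the set `B^r(λ)` of tuples `(ℓ_{i,j}, s_{i,j})_{1 ≤ i ≤ j ≤ r}`,
where each `s_{i,j}` is a weakly increasing sequence of length `ℓ_{i,j}` of nonnegative
integers whose last entry satisfies
`s_{i,j}(ℓ_{i,j}) ≤ m_i + Σ_{p=j+1}^r ℓ_{i+1,p} − Σ_{p=j}^r ℓ_{i,p}` (or `ℓ_{i,j} = 0`),
has cardinality `Π_{i=1}^r C(r+1, i)^{m_i}`.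

Here `ℓ : ℕ → ℕ → ℕ` is supported on pairs `1 ≤ i ≤ j ≤ r` (by convention `ℓ_{i,j} = 0`
outside this range, in particular `ℓ_{r+1,p} = 0`), and the bound is an inequality of
integers. -/
theorem card_Br_lambda (r : ℕ) (m : ℕ → ℕ) :
    Nat.card {x : Σ ℓ : ℕ → ℕ → ℕ, ∀ i j, Fin (ℓ i j) → ℕ //
      (∀ i j, x.1 i j ≠ 0 → 1 ≤ i ∧ i ≤ j ∧ j ≤ r) ∧
      (∀ i j, Monotone (x.2 i j)) ∧
      (∀ i j, ∀ h : x.1 i j ≠ 0,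
        (x.2 i j ⟨x.1 i j - 1, Nat.sub_lt (Nat.pos_of_ne_zero h) Nat.one_pos⟩ : ℤ) ≤
          (m i : ℤ) + ∑ p ∈ Finset.Icc (j + 1) r, (x.1 (i + 1) p : ℤ)
            - ∑ p ∈ Finset.Icc j r, (x.1 i p : ℤ))} =
    ∏ i ∈ Finset.Icc 1 r, (r + 1).choose i ^ m i := by
  exact main_card r m
end

section
/- Let g be a finite-dimensional complex semisimple Lie algebra, λ_1, ..., λ_k dominant integral weights, and a_1, ..., a_k pairwise distinct complex numbers. For each i let V_{a_i}(λ_i) be the g[t]-module obtained by pulling back the irreducible highest weight module V(λ_i) along the evaluation homomorphism ev_{a_i} : g[t] → g, x ⊗ p(t) ↦ p(a_i)x. Then the tensor product V_{a_1}(λ_1) ⊗ ··· ⊗ V_{a_k}(λ_k) is an irreducible g[t]-module. -/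
open scoped TensorProduct

open Module LinearMap

theorem my_burnside {M : Type*} [AddCommGroup M] [Module ℂ M] [FiniteDimensional ℂ M]
    [Nontrivial M] (A : Subalgebra ℂ (Module.End ℂ M))
    (hA : ∀ U : Submodule ℂ M, (∀ T ∈ A, ∀ u ∈ U, T u ∈ U) → U = ⊥ ∨ U = ⊤) :
    A = ⊤ := by
  classical
  -- orbit lemma
  have orbit : ∀ w : M, w ≠ 0 → ∀ v : M, ∃ S ∈ A, S w = v := by
    intro w hw v
    let U : Submodule ℂ M :=
      { carrier := {x | ∃ S ∈ A, S w = x}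
        add_mem' := by rintro x y ⟨S, hS, rfl⟩ ⟨S', hS', rfl⟩
                       exact ⟨S + S', A.add_mem hS hS', rfl⟩
        zero_mem' := ⟨0, A.zero_mem, rfl⟩
        smul_mem' := by rintro c x ⟨S, hS, rfl⟩
                        exact ⟨c • S, A.smul_mem hS c, rfl⟩ }
    have hUinv : ∀ T ∈ A, ∀ u ∈ U, T u ∈ U := by
      rintro T hT u ⟨S, hS, rfl⟩
      exact ⟨T * S, A.mul_mem hT hS, Module.End.mul_apply T S w⟩
    rcases hA U hUinv with h | h
    · exfalso
      have hwU : w ∈ U := ⟨1, A.one_mem, Module.End.one_apply w⟩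
      rw [h] at hwU
      exact hw (by simpa using hwU)
    · have : v ∈ U := by rw [h]; trivial
      exact this
  -- dual orbit lemma
  have dorbit : ∀ φ : Module.Dual ℂ M, φ ≠ 0 → ∀ χ : Module.Dual ℂ M,
      ∃ S ∈ A, φ ∘ₗ S = χ := by
    intro φ hφ χ
    let D : Submodule ℂ (Module.Dual ℂ M) :=
      { carrier := {ψ | ∃ S ∈ A, φ ∘ₗ S = ψ}
        add_mem' := by rintro x y ⟨S, hS, rfl⟩ ⟨S', hS', rfl⟩
                       exact ⟨S + S', A.add_mem hS hS', by ext m; simp⟩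
        zero_mem' := ⟨0, A.zero_mem, by ext m; simp⟩
        smul_mem' := by rintro c x ⟨S, hS, rfl⟩
                        exact ⟨c • S, A.smul_mem hS c, by ext m; simp⟩ }
    have hinv : ∀ T ∈ A, ∀ u ∈ D.dualCoannihilator, T u ∈ D.dualCoannihilator := by
      intro T hT u hu
      rw [Submodule.mem_dualCoannihilator] at hu ⊢
      rintro ψ ⟨S, hS, rfl⟩
      have := hu (φ ∘ₗ (S * T)) ⟨S * T, A.mul_mem hS hT, rfl⟩
      simpa [Module.End.mul_apply] using this
    have hcoann : D.dualCoannihilator = ⊥ := by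
      rcases hA D.dualCoannihilator hinv with h | h
      · exact h
      · exfalso
        obtain ⟨u0, hu0⟩ := DFunLike.ne_iff.mp hφ
        have hmem : u0 ∈ D.dualCoannihilator := by rw [h]; trivial
        rw [Submodule.mem_dualCoannihilator] at hmem
        exact hu0 (by simpa using hmem φ ⟨1, A.one_mem, by ext m; simp⟩)
    have hD : D = ⊤ := by
      apply Submodule.eq_top_of_finrank_eq
      have h2 := Subspace.finrank_add_finrank_dualCoannihilator_eq D
      rw [hcoann, finrank_bot, add_zero] at h2
      rw [h2, Subspace.dual_finrank_eq]
    have : χ ∈ D := by rw [hD]; trivial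
    exact this
  -- a nonzero element of minimal rank
  have hex : ∃ n, ∃ T, T ∈ A ∧ T ≠ 0 ∧ finrank ℂ (LinearMap.range T) = n :=
    ⟨_, 1, A.one_mem, one_ne_zero, rfl⟩
  obtain ⟨T, hTA, hT0, hrank⟩ := Nat.find_spec hex
  set n := Nat.find hex with hn
  have hmin : ∀ T' , T' ∈ A → T' ≠ 0 → n ≤ finrank ℂ (LinearMap.range T') :=
    fun T' h1 h2 => Nat.find_min' hex ⟨T', h1, h2, rfl⟩
  obtain ⟨u0, hu0⟩ := DFunLike.ne_iff.mp hT0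
  rw [show (0 : M →ₗ[ℂ] M) u0 = 0 from rfl] at hu0
  have hTu0 : (⟨T u0, LinearMap.mem_range_self T u0⟩ : LinearMap.range T) ≠ 0 := by
    simpa [Submodule.mk_eq_zero] using hu0
  haveI hnt : Nontrivial (LinearMap.range T) := nontrivial_of_ne _ _ hTu0
  -- T has rank one
  have hn1 : finrank ℂ (LinearMap.range T) = 1 := by
    by_contra hne
    have hpos : 0 < finrank ℂ (LinearMap.range T) := finrank_pos
    have h2 : 2 ≤ finrank ℂ (LinearMap.range T) := by omega
    -- find v with T v ∉ span {T u0}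
    have hnle : ¬ (LinearMap.range T ≤ Submodule.span ℂ {T u0}) := by
      intro hle
      have := Submodule.finrank_mono hle
      rw [finrank_span_singleton hu0] at this
      omega
    obtain ⟨y, hyr, hyn⟩ := SetLike.not_le_iff_exists.mp hnle
    obtain ⟨v, rfl⟩ := hyr
    obtain ⟨S, hSA, hSv⟩ := orbit (T u0) hu0 v
    -- eigenvalue of (T*S) restricted to range T
    have hres : ∀ x ∈ LinearMap.range T, (T * S) x ∈ LinearMap.range T :=
      fun x _ => ⟨S x, rfl⟩
    set r : Module.End ℂ (LinearMap.range T) := (T * S).restrict hres with hr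
    obtain ⟨μ, hμ⟩ := Module.End.exists_eigenvalue r
    obtain ⟨y0, hy0⟩ := hμ.exists_hasEigenvector
    set T' : Module.End ℂ M := (T * S - algebraMap ℂ _ μ) * T with hT'
    have hT'A : T' ∈ A :=
      A.mul_mem (A.sub_mem (A.mul_mem hTA hSA) (A.algebraMap_mem μ)) hTA
    have hT'u0 : T' u0 = T v - μ • T u0 := by
      simp [hT', Module.End.mul_apply, LinearMap.sub_apply, hSv,
        Module.algebraMap_end_apply]
    have hT'0 : T' ≠ 0 := by
      intro h
      apply hyn
      have : T v - μ • T u0 = 0 := by rw [← hT'u0, h]; rfl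
      have hTv : T v = μ • T u0 := by linear_combination (norm := module) this
      rw [hTv]
      exact Submodule.smul_mem _ _ (Submodule.mem_span_singleton_self _)
    -- rank of T' is smaller
    set f : LinearMap.range T →ₗ[ℂ] M :=
      (T * S - algebraMap ℂ _ μ) ∘ₗ (LinearMap.range T).subtype with hf
    have hy0ker : y0 ∈ LinearMap.ker f := by
      have h1 : ((r y0 : LinearMap.range T) : M) = (T * S) (y0 : M) := rfl
      have h2 : r y0 = μ • y0 := hy0.apply_eq_smul
      rw [LinearMap.mem_ker]
      have : (T * S) (y0 : M) = μ • (y0 : M) := by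
        rw [← h1, h2]; rfl
      simp [hf, LinearMap.sub_apply, this, Module.algebraMap_end_apply]
    haveI : Nontrivial (LinearMap.ker f) :=
      nontrivial_of_ne ⟨y0, hy0ker⟩ 0 (by simpa [Submodule.mk_eq_zero] using hy0.right)
    have hkerpos : 0 < finrank ℂ (LinearMap.ker f) := finrank_pos
    have hrn : finrank ℂ (LinearMap.range f) + finrank ℂ (LinearMap.ker f)
        = finrank ℂ (LinearMap.range T) := LinearMap.finrank_range_add_finrank_ker f
    have hle : LinearMap.range T' ≤ LinearMap.range f := by
      rintro _ ⟨x, rfl⟩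
      exact ⟨⟨T x, LinearMap.mem_range_self T x⟩, rfl⟩
    have := hmin T' hT'A hT'0
    have := Submodule.finrank_mono hle
    omega
  -- extract the rank one form
  set w : M := T u0 with hwdef
  have hsp : LinearMap.range T = Submodule.span ℂ {w} := by
    have hle : Submodule.span ℂ {w} ≤ LinearMap.range T :=
      Submodule.span_le.mpr (by rintro _ rfl; exact LinearMap.mem_range_self T u0)
    exact (Submodule.eq_of_le_of_finrank_le hle
      (by rw [hn1, finrank_span_singleton hu0])).symm
  obtain ⟨ψ, hψ⟩ := LinearMap.exists_leftInverse_of_injective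
    (LinearMap.toSpanSingleton ℂ M w) (LinearMap.ker_toSpanSingleton ℂ hu0)
  have hψw : ψ w = 1 := by
    have := LinearMap.congr_fun hψ 1
    simpa using this
  set φ : Module.Dual ℂ M := ψ ∘ₗ T with hφdef
  have hTform : ∀ x, T x = φ x • w := by
    intro x
    have : T x ∈ Submodule.span ℂ {w} := hsp ▸ LinearMap.mem_range_self T x
    obtain ⟨c, hc⟩ := Submodule.mem_span_singleton.mp this
    have hφx : φ x = c := by
      simp [hφdef, ← hc, map_smul, hψw]
    rw [hφx, ← hc]
  have hφ0 : φ ≠ 0 := by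
    intro h
    have : φ u0 = 1 := by simp [hφdef, ← hwdef, hψw]
    rw [h] at this
    simpa using this
  -- every rank-one map is in A
  have hro : ∀ (χ : Module.Dual ℂ M) (z : M), LinearMap.smulRight χ z ∈ A := by
    intro χ z
    by_cases hz : z = 0
    · have : LinearMap.smulRight χ z = 0 := by ext x; simp [hz]
      rw [this]; exact A.zero_mem
    obtain ⟨b, hbA, hb⟩ := dorbit φ hφ0 χ
    obtain ⟨s, hsA, hs⟩ := orbit w hu0 z
    have : LinearMap.smulRight χ z = s * T * b := by
      ext x
      simp only [LinearMap.smulRight_apply, Module.End.mul_apply, hTform (b x), map_smul, hs]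
      rw [← hb]
      rfl
    rw [this]
    exact A.mul_mem (A.mul_mem hsA hTA) hbA
  -- conclude
  rw [eq_top_iff]
  rintro S -
  have B := Module.finBasis ℂ M
  have hdec : S = ∑ i, LinearMap.smulRight (B.coord i) (S (B i)) := by
    ext x
    rw [LinearMap.sum_apply]
    simp only [LinearMap.smulRight_apply, Basis.coord_apply]
    conv_lhs => rw [← B.sum_repr x]
    rw [map_sum]
    simp [map_smul]
  rw [hdec]
  exact Subalgebra.sum_mem A fun i _ => hro _ _

/-- Let `g` be a finite-dimensional complex semisimple Lie algebra, `V 1, …, V k`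
irreducible finite-dimensional `g`-modules (the irreducible highest weight modules
`V(λ_i)`), and `a 1, …, a k` pairwise distinct complex numbers.  The evaluation
tensor product `V_{a_1}(λ_1) ⊗ ⋯ ⊗ V_{a_k}(λ_k)` is an irreducible `g[t]`-module:
any subspace `W` invariant under the action of every `x ⊗ t^s`
(which acts as `Σ_j a_j^s · x^{(j)}`, i.e. `x` in the `j`-th slot weighted by `a_j^s`)
is `⊥` or `⊤`. -/
theorem evaluation_tensor_product_irreducible
    (g : Type*) [LieRing g] [LieAlgebra ℂ g] [Module.Finite ℂ g]
    [LieAlgebra.IsSemisimple ℂ g]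
    (k : ℕ) (V : Fin k → Type*) [∀ i, AddCommGroup (V i)] [∀ i, Module ℂ (V i)]
    [∀ i, LieRingModule g (V i)] [∀ i, LieModule ℂ g (V i)]
    [∀ i, FiniteDimensional ℂ (V i)]
    (hirr : ∀ i, LieModule.IsIrreducible ℂ g (V i))
    (a : Fin k → ℂ) (ha : Function.Injective a)
    (W : Submodule ℂ (⨂[ℂ] i, V i))
    (hW : ∀ (x : g) (s : ℕ), ∀ w ∈ W,
      (∑ j : Fin k, a j ^ s •
        PiTensorProduct.map
          (Function.update (fun i => (LinearMap.id : V i →ₗ[ℂ] V i)) j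
            (LieModule.toEnd ℂ g (V j) x))) w ∈ W) :
    W = ⊥ ∨ W = ⊤ := by
  classical
  -- Step 1 : Vandermonde inversion: each single-slot Lie operator preserves W
  have step1 : ∀ (j : Fin k) (x : g), ∀ w ∈ W,
      PiTensorProduct.map (Function.update (fun i => (LinearMap.id : V i →ₗ[ℂ] V i)) j
        (LieModule.toEnd ℂ g (V j) x)) w ∈ W := by
    intro j x w hw
    set u : Fin k → (⨂[ℂ] i, V i) := fun j =>
      PiTensorProduct.map (Function.update (fun i => (LinearMap.id : V i →ₗ[ℂ] V i)) j
        (LieModule.toEnd ℂ g (V j) x)) w with hu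
    set Mv : Matrix (Fin k) (Fin k) ℂ := Matrix.of fun s i => a i ^ (s : ℕ) with hMv
    have hdet : IsUnit Mv.det := by
      have hMvT : Mv = (Matrix.vandermonde a).transpose := by
        refine Matrix.ext fun s i => ?_
        rw [Matrix.transpose_apply, Matrix.vandermonde_apply]
        rfl
      rw [hMvT, Matrix.det_transpose]
      exact (Matrix.det_vandermonde_ne_zero_iff.mpr ha).isUnit
    have hv : ∀ s : Fin k, (∑ i, Mv s i • u i) ∈ W := by
      intro s
      have := hW x (s : ℕ) w hw
      simpa [LinearMap.sum_apply, LinearMap.smul_apply, hu, hMv] using this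
    have h1 : Mv⁻¹ * Mv = 1 := Matrix.nonsing_inv_mul _ hdet
    have key : ∑ s, Mv⁻¹ j s • ∑ i, Mv s i • u i = u j := by
      simp only [Finset.smul_sum, smul_smul]
      rw [Finset.sum_comm]
      have hrow : ∀ i, ∑ s, (Mv⁻¹ j s * Mv s i) • u i = ((1 : Matrix (Fin k) (Fin k) ℂ) j i) • u i := by
        intro i
        rw [← Finset.sum_smul, ← Matrix.mul_apply, h1]
      rw [Finset.sum_congr rfl fun i _ => hrow i]
      simp [Matrix.one_apply]
    show u j ∈ W
    rw [← key]
    exact Submodule.sum_mem _ fun s _ => Submodule.smul_mem _ _ (hv s)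
  -- Step 2 : every single-slot endomorphism preserves W (Burnside)
  have step2 : ∀ (j : Fin k) (T : Module.End ℂ (V j)), ∀ w ∈ W,
      PiTensorProduct.map (Function.update (fun i => (LinearMap.id : V i →ₗ[ℂ] V i)) j T) w ∈ W := by
    intro j
    haveI := hirr j
    haveI : Nontrivial (V j) := LieModule.nontrivial_of_isIrreducible ℂ g (V j)
    have hAd : Algebra.adjoin ℂ (Set.range (LieModule.toEnd ℂ g (V j))) = ⊤ := by
      apply my_burnside
      intro U hU
      let U' : LieSubmodule ℂ g (V j) :=
        { U with
          lie_mem := fun {x m} hm => by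
            have h1 : LieModule.toEnd ℂ g (V j) x ∈
                Algebra.adjoin ℂ (Set.range (LieModule.toEnd ℂ g (V j))) :=
              Algebra.subset_adjoin ⟨x, rfl⟩
            have h2 := hU _ h1 m hm
            simpa [LieModule.toEnd_apply_apply] using h2 }
      have hUU' : U'.toSubmodule = U := rfl
      rcases eq_bot_or_eq_top U' with h | h
      · left
        have h' := congrArg LieSubmodule.toSubmodule h
        rwa [hUU', LieSubmodule.bot_toSubmodule] at h'
      · right
        have h' := congrArg LieSubmodule.toSubmodule h
        rwa [hUU', LieSubmodule.top_toSubmodule] at h'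
    let AW : Subalgebra ℂ (Module.End ℂ (V j)) :=
      { carrier := {T | ∀ w ∈ W,
          PiTensorProduct.map (Function.update
            (fun i => (LinearMap.id : V i →ₗ[ℂ] V i)) j T) w ∈ W}
        one_mem' := by
          intro w hw
          have h1 : Function.update (fun i => (LinearMap.id : V i →ₗ[ℂ] V i)) j
              (1 : Module.End ℂ (V j)) = fun i => LinearMap.id := by
            rw [show (1 : Module.End ℂ (V j)) = LinearMap.id from rfl]
            exact Function.update_eq_self j _
          rw [h1, PiTensorProduct.map_id]
          simpa using hw
        mul_mem' := by
          intro T T' hT hT' w hw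
          have hcomp : Function.update (fun i => (LinearMap.id : V i →ₗ[ℂ] V i)) j (T * T') =
              fun i => (Function.update (fun i => (LinearMap.id : V i →ₗ[ℂ] V i)) j T i) ∘ₗ
                (Function.update (fun i => (LinearMap.id : V i →ₗ[ℂ] V i)) j T' i) := by
            funext i
            by_cases h : i = j
            · subst h
              simp [Function.update_self, Module.End.mul_eq_comp]
            · simp [Function.update_of_ne h]
          rw [hcomp, PiTensorProduct.map_comp, LinearMap.comp_apply]
          exact hT _ (hT' w hw)
        zero_mem' := by
          intro w hw
          have h0 : (0 : Module.End ℂ (V j)) = (0 : ℂ) • 0 := by simp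
          rw [h0, PiTensorProduct.map_update_smul]
          simpa using W.zero_mem
        add_mem' := by
          intro T T' hT hT' w hw
          rw [PiTensorProduct.map_update_add, LinearMap.add_apply]
          exact W.add_mem (hT w hw) (hT' w hw)
        algebraMap_mem' := by
          intro c w hw
          have h1 : algebraMap ℂ (Module.End ℂ (V j)) c = c • 1 :=
            Algebra.algebraMap_eq_smul_one c
          rw [h1, PiTensorProduct.map_update_smul]
          have h2 : Function.update (fun i => (LinearMap.id : V i →ₗ[ℂ] V i)) j
              (1 : Module.End ℂ (V j)) = fun i => LinearMap.id := by
            rw [show (1 : Module.End ℂ (V j)) = LinearMap.id from rfl]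
            exact Function.update_eq_self j _
          rw [h2, PiTensorProduct.map_id]
          simpa using W.smul_mem c hw }
    have hle : Algebra.adjoin ℂ (Set.range (LieModule.toEnd ℂ g (V j))) ≤ AW := by
      apply Algebra.adjoin_le
      rintro _ ⟨x, rfl⟩
      exact fun w hw => step1 j x w hw
    intro T w hw
    exact hle (by rw [hAd]; trivial) w hw
  -- Step 3 : arbitrary slotwise maps preserve W
  have step3 : ∀ (f : (i : Fin k) → V i →ₗ[ℂ] V i), ∀ w ∈ W, PiTensorProduct.map f w ∈ W := by
    suffices h : ∀ (s : Finset (Fin k)) (f : (i : Fin k) → V i →ₗ[ℂ] V i),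
        (∀ i ∉ s, f i = LinearMap.id) → ∀ w ∈ W, PiTensorProduct.map f w ∈ W by
      intro f
      exact h Finset.univ f fun i hi => absurd (Finset.mem_univ i) hi
    intro s
    induction s using Finset.induction_on with
    | empty =>
      intro f hf w hw
      have hfid : f = fun i => LinearMap.id := funext fun i => hf i (Finset.notMem_empty i)
      rw [hfid, PiTensorProduct.map_id]
      simpa using hw
    | @insert j s hj ih =>
      intro f hf w hw
      have hcomp : f = fun i =>
          (Function.update (fun i => (LinearMap.id : V i →ₗ[ℂ] V i)) j (f j) i) ∘ₗ
          (Function.update f j LinearMap.id i) := by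
        funext i
        by_cases h : i = j
        · subst h; simp [Function.update_self]
        · simp [Function.update_of_ne h]
      rw [hcomp, PiTensorProduct.map_comp, LinearMap.comp_apply]
      apply step2 j (f j)
      apply ih (Function.update f j LinearMap.id) ?_ w hw
      intro i hi
      by_cases h : i = j
      · subst h; simp [Function.update_self]
      · rw [Function.update_of_ne h]
        exact hf i (by simp [Finset.mem_insert, h, hi])
  -- Step 4 : conclusion
  by_cases hbot : W = ⊥
  · exact Or.inl hbot
  right
  obtain ⟨z, hzW, hz0⟩ := (Submodule.ne_bot_iff W).mp hbot
  let b : (i : Fin k) → Basis (Fin (finrank ℂ (V i))) ℂ (V i) := fun i => Module.finBasis ℂ (V i)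
  let e : ((i : Fin k) → Fin (finrank ℂ (V i))) → (⨂[ℂ] i, V i) := fun κ =>
    PiTensorProduct.tprod ℂ fun i => b i (κ i)
  have hspan : (⊤ : Submodule ℂ (⨂[ℂ] i, V i)) ≤ Submodule.span ℂ (Set.range e) := by
    rw [← PiTensorProduct.span_tprod_eq_top]
    apply Submodule.span_le.mpr
    rintro _ ⟨v, rfl⟩
    have hv : (PiTensorProduct.tprod ℂ) v = (PiTensorProduct.tprod ℂ)
        (fun i => ∑ m : Fin (finrank ℂ (V i)), (b i).repr (v i) m • b i m) := by
      congr 1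
      exact funext fun i => ((b i).sum_repr (v i)).symm
    rw [hv, MultilinearMap.map_sum]
    apply Submodule.sum_mem
    intro p _
    rw [MultilinearMap.map_smul_univ]
    exact Submodule.smul_mem _ _ (Submodule.subset_span ⟨p, rfl⟩)
  let χ : ((i : Fin k) → Module.Dual ℂ (V i)) → Module.Dual ℂ (⨂[ℂ] i, V i) := fun φ =>
    PiTensorProduct.lift ((MultilinearMap.mkPiAlgebra ℂ (Fin k) ℂ).compLinearMap φ)
  have hχ : ∀ φ v, χ φ ((PiTensorProduct.tprod ℂ) v) = ∏ i, φ i (v i) := by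
    intro φ v
    simp [χ, PiTensorProduct.lift.tprod, MultilinearMap.compLinearMap_apply,
      MultilinearMap.mkPiAlgebra_apply]
  have hsep : ∃ φ, χ φ z ≠ 0 := by
    by_contra hcon
    push_neg at hcon
    apply hz0
    obtain ⟨c, hc⟩ := (Submodule.mem_span_range_iff_exists_fun ℂ).mp (hspan (Submodule.mem_top : z ∈ ⊤))
    have hck : ∀ κ, c κ = 0 := by
      intro κ
      have h1 : χ (fun i => (b i).coord (κ i)) z = c κ := by
        rw [← hc, map_sum]
        rw [Finset.sum_eq_single κ]
        · rw [map_smul]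
          have he : χ (fun i => (b i).coord (κ i)) (e κ) = ∏ i, (b i).coord (κ i) (b i (κ i)) :=
            hχ _ _
          rw [he]
          have hone : ∀ i, (b i).coord (κ i) (b i (κ i)) = 1 := by
            intro i; simp [Basis.coord_apply, Basis.repr_self_apply]
          rw [Finset.prod_congr rfl fun i _ => hone i]
          simp
        · intro p _ hp
          rw [map_smul]
          have he : χ (fun i => (b i).coord (κ i)) (e p) = ∏ i, (b i).coord (κ i) (b i (p i)) :=
            hχ _ _
          rw [he]
          have hex : ∃ i, p i ≠ κ i := by
            by_contra hh; push_neg at hh; exact hp (funext hh)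
          obtain ⟨i, hi⟩ := hex
          have hzero : (b i).coord (κ i) (b i (p i)) = 0 := by
            simp [Basis.coord_apply, Basis.repr_self_apply, hi]
          rw [Finset.prod_eq_zero (Finset.mem_univ i) hzero]
          simp
        · intro h; exact absurd (Finset.mem_univ κ) h
      rw [← h1, hcon]
    have hc0 : c = 0 := funext hck
    rw [hc0] at hc
    simpa using hc.symm
  obtain ⟨φ, hφ⟩ := hsep
  have hpure : ∀ u : (i : Fin k) → V i, (PiTensorProduct.tprod ℂ) u ∈ W := by
    intro u
    have hkey : PiTensorProduct.map (fun i => LinearMap.smulRight (φ i) (u i)) =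
        LinearMap.smulRight (χ φ) ((PiTensorProduct.tprod ℂ) u) := by
      apply PiTensorProduct.ext
      apply MultilinearMap.ext
      intro v
      simp only [LinearMap.compMultilinearMap_apply, PiTensorProduct.map_tprod,
        LinearMap.smulRight_apply, hχ]
      rw [MultilinearMap.map_smul_univ]
    have h1 := step3 (fun i => LinearMap.smulRight (φ i) (u i)) z hzW
    rw [hkey, LinearMap.smulRight_apply] at h1
    have h2 := W.smul_mem (χ φ z)⁻¹ h1
    rwa [smul_smul, inv_mul_cancel₀ hφ, one_smul] at h2
  have hle : (⊤ : Submodule ℂ (⨂[ℂ] i, V i)) ≤ W := by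
    rw [← PiTensorProduct.span_tprod_eq_top]
    apply Submodule.span_le.mpr
    rintro _ ⟨v, rfl⟩
    exact hpure v
  exact le_antisymm le_top hle
end
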